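/- Let P be the (n×n) transition matrix of the lazy reflecting random walk on a path with n ≥ 2 vertices: p_{1,1} = p_{n,n} = 2/3, p_{i,j} = 1/3 whenever |i-j| ≤ 1 otherwise, and p_{i,j} = 0 when |i-j| > 1. Then there is an absolute constant c > 0 (independent of n) such that the (1,1) entry of I + P + P² + ... + P^t is at most c·√t for all 1 ≤ t ≤ n². -/

import Mathlib

open Real Finset

namespace Stmt9Aux

set_option maxHeartbeats 1000000



/-- Geometric cosine sum over a full period is 0. -/
lemma csum_period (n m : ℕ) (hn : 1 ≤ n) (hm1 : 1 ≤ m) (hm2 : m < 2*n) :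
    ∑ k ∈ Finset.range (2*n), Real.cos (k*(m*π/n)) = 0 := by
  set x : ℝ := m*π/n with hx
  have hz : ∀ k : ℕ, Real.cos (k*x) = (Complex.exp (x*Complex.I) ^ k).re := by
    intro k
    rw [← Complex.exp_nat_mul]
    have : (k : ℂ) * (x*Complex.I) = (((k*x : ℝ)) : ℂ) * Complex.I := by push_cast; ring
    rw [this, Complex.exp_ofReal_mul_I_re]
  have hnr : (n:ℝ) ≠ 0 := Nat.cast_ne_zero.2 (by omega)
  have hne : Complex.exp (x*Complex.I) ≠ 1 := by
    rw [Ne, Complex.exp_eq_one_iff]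
    rintro ⟨j, hj⟩
    have hx' : (x : ℂ) = (j : ℂ) * (2*π) :=
      mul_right_cancel₀ Complex.I_ne_zero
        (by linear_combination hj : (x:ℂ)*Complex.I = ((j:ℂ)*(2*π))*Complex.I)
    have hxr : x = j * (2*π) := by exact_mod_cast hx'
    rw [hx] at hxr
    field_simp at hxr
    have hmr : (m:ℝ) = 2*j*n :=
      by linear_combination hxr
    have hmz : (m:ℤ) = 2*j*n := by exact_mod_cast hmr
    have hn' : (1:ℤ) ≤ n := by exact_mod_cast hn
    have hm1' : (1:ℤ) ≤ m := by exact_mod_cast hm1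
    have hm2' : (m:ℤ) < 2*n := by exact_mod_cast hm2
    rcases le_or_gt j 0 with h | h
    · nlinarith
    · nlinarith
  have hone : Complex.exp (x*Complex.I) ^ (2*n) = 1 := by
    rw [← Complex.exp_nat_mul]
    have : (2*n : ℕ) * ((x:ℂ)*Complex.I) = (m : ℤ) * (2*π*Complex.I) := by
      have hnc : (n : ℂ) ≠ 0 := by exact_mod_cast hnr
      rw [hx]
      push_cast
      field_simp
    rw [this]
    exact Complex.exp_int_mul_two_pi_mul_I m
  have hsum : ∑ k ∈ Finset.range (2*n), Complex.exp (x*Complex.I) ^ k = 0 := by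
    rw [geom_sum_eq hne, hone]
    simp
  calc ∑ k ∈ Finset.range (2*n), Real.cos (k*x)
      = (∑ k ∈ Finset.range (2*n), Complex.exp (x*Complex.I) ^ k).re := by
        rw [Complex.re_sum]; exact Finset.sum_congr rfl fun k _ => hz k
    _ = 0 := by rw [hsum]; simp

/-- Half-period cosine sum. -/
lemma csum_half (n m : ℕ) (hn : 1 ≤ n) (hm1 : 1 ≤ m) (hm2 : m < 2*n) :
    ∑ k ∈ Finset.range n, Real.cos (k*(m*π/n)) = (1 - Real.cos (m*π))/2 := by
  set x : ℝ := m*π/n with hx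
  have hnr : (n:ℝ) ≠ 0 := Nat.cast_ne_zero.2 (by omega)
  have h0 := csum_period n m hn hm1 hm2
  rw [two_mul, Finset.sum_range_add] at h0
  have h1 : ∀ k ∈ Finset.range n, Real.cos ((↑(n+k))*x) = Real.cos (((n:ℝ)-k)*x) := by
    intro k _
    have harg : ((↑(n+k)):ℝ)*x = (m:ℤ)*(2*π) - ((n:ℝ)-k)*x := by
      rw [hx]; push_cast; field_simp; ring
    rw [harg, Real.cos_int_mul_two_pi_sub]
  rw [Finset.sum_congr rfl h1] at h0
  have h2 : ∑ k ∈ Finset.range n, Real.cos (((n:ℝ)-k)*x)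
      = ∑ k ∈ Finset.range n, Real.cos (((k:ℝ)+1)*x) := by
    rw [← Finset.sum_range_reflect (fun j => Real.cos (((j:ℝ)+1)*x)) n]
    refine Finset.sum_congr rfl fun j hj => ?_
    have hj' : j < n := Finset.mem_range.1 hj
    congr 2
    have : ((n - 1 - j : ℕ) : ℝ) = (n:ℝ) - 1 - j := by
      push_cast [Nat.cast_sub (by omega : j ≤ n - 1), Nat.cast_sub (by omega : 1 ≤ n)]
      ring
    rw [this]; ring
  rw [h2] at h0
  have h3 : ∑ k ∈ Finset.range n, Real.cos (((k:ℝ)+1)*x)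
      = (∑ k ∈ Finset.range n, Real.cos (k*x)) + Real.cos (n*x) - 1 := by
    have := Finset.sum_range_succ' (fun k => Real.cos (k*x)) n
    rw [Finset.sum_range_succ] at this
    simp only [Nat.cast_zero, zero_mul, Real.cos_zero, Nat.cast_add, Nat.cast_one] at this
    linarith [this]
  have h4 : Real.cos ((n:ℝ)*x) = Real.cos (m*π) := by
    congr 1; rw [hx]; field_simp
  rw [h3, h4] at h0
  linarith

lemma cos3 (α : ℝ) : Real.cos (3*α) = 2*Real.cos (2*α)*Real.cos α - Real.cos α := by
  have e1 : Real.cos (2*α+α) = Real.cos (2*α)*Real.cos α - Real.sin (2*α)*Real.sin α :=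
    Real.cos_add _ _
  have e2 : Real.cos (2*α-α) = Real.cos (2*α)*Real.cos α + Real.sin (2*α)*Real.sin α :=
    Real.cos_sub _ _
  have h1 : (3:ℝ)*α = 2*α+α := by ring
  have h2 : (2:ℝ)*α-α = α := by ring
  rw [h1, e1]
  rw [h2] at e2
  linarith

/-- Eigenvector equation for the lazy reflecting walk. -/
lemma eigen (n : ℕ) (hn : 2 ≤ n) (P : Matrix (Fin n) (Fin n) ℝ)
    (hP : ∀ i j : Fin n, P i j =
      if ((i : ℕ) = 0 ∧ (j : ℕ) = 0) ∨ ((i : ℕ) = n - 1 ∧ (j : ℕ) = n - 1) then (2/3 : ℝ)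
      else if (i : ℕ) ≤ (j : ℕ) + 1 ∧ (j : ℕ) ≤ (i : ℕ) + 1 then (1/3 : ℝ) else 0)
    (k : ℕ) (i : Fin n) :
    ∑ j : Fin n, P i j * Real.cos ((2*(j:ℕ)+1)*((k:ℝ)*(π/(2*n))))
      = (1/3 + 2/3 * Real.cos (2*((k:ℝ)*(π/(2*n)))))
        * Real.cos ((2*(i:ℕ)+1)*((k:ℝ)*(π/(2*n)))) := by
  set α : ℝ := (k:ℝ)*(π/(2*n)) with hα
  set m : ℕ := (i:ℕ) with hmdef
  have hm : m < n := i.2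
  set F : ℕ → ℝ := fun jj =>
    (if (m = 0 ∧ jj = 0) ∨ (m = n - 1 ∧ jj = n - 1) then (2/3 : ℝ)
      else if m ≤ jj + 1 ∧ jj ≤ m + 1 then (1/3 : ℝ) else 0)
      * Real.cos ((2*(jj:ℝ)+1)*α) with hFdef
  have hrw : ∑ j : Fin n, P i j * Real.cos ((2*(j:ℕ)+1)*α) = ∑ jj ∈ Finset.range n, F jj := by
    rw [← Fin.sum_univ_eq_sum_range F n]
    exact Finset.sum_congr rfl fun j _ => by rw [hP]
  rw [hrw]
  rcases eq_or_ne m 0 with hm0 | hm0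
  · -- left boundary
    have hzero : ∀ jj ∈ Finset.range n, jj ∉ Finset.range 2 → F jj = 0 := by
      intro jj _ hjj2
      have h2 : 2 ≤ jj := by simp at hjj2; omega
      simp only [hFdef]
      split_ifs with h1 h2' <;> first | omega | (simp only [true_and, and_true, false_and, and_false, or_false, false_or] at *; omega) | exact zero_mul _
    rw [← Finset.sum_subset (Finset.range_subset_range.2 (by omega : 2 ≤ n)) hzero]
    rw [Finset.sum_range_succ, Finset.sum_range_one]
    have hF0 : F 0 = 2/3 * Real.cos α := by
      simp only [hFdef]
      split_ifs with h1 <;> first | omega | (simp only [true_and, and_true, false_and, and_false, or_false, false_or] at *; omega) | (push_cast; ring_nf)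
    have hF1 : F 1 = 1/3 * Real.cos (3*α) := by
      simp only [hFdef]
      split_ifs with h1 h2 <;> first | omega | (simp only [true_and, and_true, false_and, and_false, or_false, false_or] at *; omega) | (push_cast; ring_nf)
    rw [hF0, hF1, cos3]
    have : ((2:ℝ)*(m:ℝ)+1) = 1 := by
      have : m = 0 := hm0
      rw [this]; norm_num
    rw [this]
    ring_nf
  · rcases eq_or_ne m (n-1) with hmn | hmn
    · -- right boundary
      obtain ⟨q, rfl⟩ : ∃ q, n = q + 2 := ⟨n - 2, by omega⟩
      have hmq : m = q + 1 := by omega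
      have hzero : ∀ jj ∈ Finset.Ico 0 q, F jj = 0 := by
        intro jj hjj
        have : jj < q := (Finset.mem_Ico.1 hjj).2
        simp only [hFdef]
        split_ifs with h1 h2 <;> first | omega | (simp only [true_and, and_true, false_and, and_false, or_false, false_or] at *; omega) | exact zero_mul _
      have hsplit : ∑ jj ∈ Finset.range (q+2), F jj
          = ∑ jj ∈ Finset.Ico 0 q, F jj + ∑ jj ∈ Finset.Ico q (q+2), F jj := by
        rw [Finset.range_eq_Ico,
          ← Finset.sum_Ico_consecutive _ (by omega : 0 ≤ q) (by omega : q ≤ q+2)]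
      rw [hsplit, Finset.sum_eq_zero hzero, zero_add]
      have hIco : ∑ jj ∈ Finset.Ico q (q+2), F jj = F q + F (q+1) := by
        rw [Finset.sum_Ico_succ_top (by omega), Finset.sum_Ico_succ_top (by omega)]
        simp
      rw [hIco]
      have hFq : F q = 1/3 * Real.cos ((2*(q:ℝ)+1)*α) := by
        simp only [hFdef]
        split_ifs with h1 h2 <;> first | omega | (simp only [true_and, and_true, false_and, and_false, or_false, false_or] at *; omega) | (push_cast; ring_nf)
      have hFq1 : F (q+1) = 2/3 * Real.cos ((2*(q:ℝ)+3)*α) := by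
        simp only [hFdef]
        split_ifs with h1 <;> first | omega | (simp only [true_and, and_true, false_and, and_false, or_false, false_or] at *; omega) | (push_cast; ring_nf)
      rw [hFq, hFq1]
      have hq2 : ((q:ℝ)+2) ≠ 0 := by positivity
      have ha1 : (2*(q:ℝ)+3)*α = (k:ℝ)*π - α := by
        rw [hα]; push_cast; field_simp; ring
      have ha2 : (2*(q:ℝ)+1)*α = (k:ℝ)*π - 3*α := by
        rw [hα]; push_cast; field_simp; ring
      have hs : Real.sin ((k:ℝ)*π) = 0 := Real.sin_nat_mul_pi k
      have hmcast : ((2:ℝ)*(m:ℝ)+1) = 2*(q:ℝ)+3 := by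
        rw [hmq]; push_cast; ring
      rw [hmcast, ha1, ha2, Real.cos_sub, Real.cos_sub, hs, cos3]
      ring
    · -- interior
      obtain ⟨q, hmq⟩ : ∃ q, m = q + 1 := ⟨m - 1, by omega⟩
      have hq3 : q + 3 ≤ n := by omega
      have hzero1 : ∀ jj ∈ Finset.Ico 0 q, F jj = 0 := by
        intro jj hjj
        have : jj < q := (Finset.mem_Ico.1 hjj).2
        simp only [hFdef]
        split_ifs with h1 h2 <;> first | omega | (simp only [true_and, and_true, false_and, and_false, or_false, false_or] at *; omega) | exact zero_mul _
      have hzero2 : ∀ jj ∈ Finset.Ico (q+3) n, F jj = 0 := by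
        intro jj hjj
        have : q + 3 ≤ jj := (Finset.mem_Ico.1 hjj).1
        have : jj < n := (Finset.mem_Ico.1 hjj).2
        simp only [hFdef]
        split_ifs with h1 h2 <;> first | omega | (simp only [true_and, and_true, false_and, and_false, or_false, false_or] at *; omega) | exact zero_mul _
      have hsplit : ∑ jj ∈ Finset.range n, F jj
          = ∑ jj ∈ Finset.Ico 0 q, F jj + ∑ jj ∈ Finset.Ico q (q+3), F jj
            + ∑ jj ∈ Finset.Ico (q+3) n, F jj := by
        rw [Finset.range_eq_Ico,
          ← Finset.sum_Ico_consecutive _ (by omega : 0 ≤ q+3) (by omega : q+3 ≤ n),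
          ← Finset.sum_Ico_consecutive _ (by omega : 0 ≤ q) (by omega : q ≤ q+3)]
      rw [hsplit, Finset.sum_eq_zero hzero1, Finset.sum_eq_zero hzero2, zero_add, add_zero]
      have hIco : ∑ jj ∈ Finset.Ico q (q+3), F jj = F q + F (q+1) + F (q+2) := by
        rw [Finset.sum_Ico_succ_top (by omega), Finset.sum_Ico_succ_top (by omega),
          Finset.sum_Ico_succ_top (by omega)]
        simp
      rw [hIco]
      have hFq : F q = 1/3 * Real.cos ((2*(q:ℝ)+1)*α) := by
        simp only [hFdef]
        split_ifs with h1 h2 <;> first | omega | (simp only [true_and, and_true, false_and, and_false, or_false, false_or] at *; omega) | (push_cast; ring_nf)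
      have hFq1 : F (q+1) = 1/3 * Real.cos ((2*(q:ℝ)+3)*α) := by
        simp only [hFdef]
        split_ifs with h1 h2 <;> first | omega | (simp only [true_and, and_true, false_and, and_false, or_false, false_or] at *; omega) | (push_cast; ring_nf)
      have hFq2 : F (q+2) = 1/3 * Real.cos ((2*(q:ℝ)+5)*α) := by
        simp only [hFdef]
        split_ifs with h1 h2 <;> first | omega | (simp only [true_and, and_true, false_and, and_false, or_false, false_or] at *; omega) | (push_cast; ring_nf)
      rw [hFq, hFq1, hFq2]
      have e1 : Real.cos ((2*(q:ℝ)+3)*α + 2*α)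
          = Real.cos ((2*(q:ℝ)+3)*α)*Real.cos (2*α) - Real.sin ((2*(q:ℝ)+3)*α)*Real.sin (2*α) :=
        Real.cos_add _ _
      have e2 : Real.cos ((2*(q:ℝ)+3)*α - 2*α)
          = Real.cos ((2*(q:ℝ)+3)*α)*Real.cos (2*α) + Real.sin ((2*(q:ℝ)+3)*α)*Real.sin (2*α) :=
        Real.cos_sub _ _
      have h1 : (2*(q:ℝ)+5)*α = (2*(q:ℝ)+3)*α + 2*α := by ring
      have h2 : (2*(q:ℝ)+1)*α = (2*(q:ℝ)+3)*α - 2*α := by ring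
      have hmcast : ((2:ℝ)*(m:ℝ)+1) = 2*(q:ℝ)+3 := by
        rw [hmq]; push_cast; ring
      rw [hmcast, h1, h2, e1, e2]
      ring

/-- Completeness relation: expansion of the delta at vertex 0. -/
lemma base_case (n : ℕ) (hn : 2 ≤ n) (i : Fin n) :
    ∑ k ∈ Finset.range n, ((if k = 0 then (1:ℝ) else 2)/n * Real.cos ((k:ℝ)*(π/(2*n))))
        * Real.cos ((2*(i:ℕ)+1)*((k:ℝ)*(π/(2*n))))
      = if (i:ℕ) = 0 then 1 else 0 := by
  have hnr : (n:ℝ) ≠ 0 := Nat.cast_ne_zero.2 (by omega)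
  set m : ℕ := (i:ℕ) with hmdef
  have hm : m < n := i.2
  set f : ℕ → ℝ := fun k => ((if k = 0 then (1:ℝ) else 2)/n * Real.cos ((k:ℝ)*(π/(2*n))))
        * Real.cos ((2*(m:ℝ)+1)*((k:ℝ)*(π/(2*n)))) with hfdef
  have hsplit : ∑ k ∈ Finset.range n, f k = f 0 + ∑ k ∈ Finset.Ico 1 n, f k := by
    rw [Finset.range_eq_Ico,
      ← Finset.sum_Ico_consecutive _ (by omega : 0 ≤ 1) (by omega : 1 ≤ n)]
    congr 1
    simp
  have hf0 : f 0 = 1/n := by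
    simp [hfdef]
  have hprod : ∀ k ∈ Finset.Ico 1 n, f k
      = 1/n * (Real.cos ((k:ℝ)*((m:ℕ)*π/n)) + Real.cos ((k:ℝ)*(((m:ℕ)+1)*π/n))) := by
    intro k hk
    have hk1 : 1 ≤ k := (Finset.mem_Ico.1 hk).1
    simp only [hfdef]
    rw [if_neg (by omega)]
    have e1 : Real.cos ((2*(m:ℝ)+1)*((k:ℝ)*(π/(2*n))) + (k:ℝ)*(π/(2*n)))
        = Real.cos ((2*(m:ℝ)+1)*((k:ℝ)*(π/(2*n))))*Real.cos ((k:ℝ)*(π/(2*n)))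
          - Real.sin ((2*(m:ℝ)+1)*((k:ℝ)*(π/(2*n))))*Real.sin ((k:ℝ)*(π/(2*n))) :=
      Real.cos_add _ _
    have e2 : Real.cos ((2*(m:ℝ)+1)*((k:ℝ)*(π/(2*n))) - (k:ℝ)*(π/(2*n)))
        = Real.cos ((2*(m:ℝ)+1)*((k:ℝ)*(π/(2*n))))*Real.cos ((k:ℝ)*(π/(2*n)))
          + Real.sin ((2*(m:ℝ)+1)*((k:ℝ)*(π/(2*n))))*Real.sin ((k:ℝ)*(π/(2*n))) :=
      Real.cos_sub _ _
    have h1 : (2*(m:ℝ)+1)*((k:ℝ)*(π/(2*n))) + (k:ℝ)*(π/(2*n)) = (k:ℝ)*(((m:ℕ)+1)*π/n) := by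
      push_cast; field_simp; ring
    have h2 : (2*(m:ℝ)+1)*((k:ℝ)*(π/(2*n))) - (k:ℝ)*(π/(2*n)) = (k:ℝ)*((m:ℕ)*π/n) := by
      push_cast; field_simp; ring
    rw [h1] at e1
    rw [h2] at e2
    have hsum2 : Real.cos ((k:ℝ)*((m:ℕ)*π/n)) + Real.cos ((k:ℝ)*(((m:ℕ)+1)*π/n))
        = 2*(Real.cos ((2*(m:ℝ)+1)*((k:ℝ)*(π/(2*n)))) * Real.cos ((k:ℝ)*(π/(2*n)))) := by
      push_cast
      linarith [e1, e2]
    push_cast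
    rw [hsum2]
    ring
  rw [hsplit, Finset.sum_congr rfl hprod, hf0]
  rw [← Finset.mul_sum, Finset.sum_add_distrib]
  have hIS : ∀ mm : ℕ, 1 ≤ mm → mm < 2*n →
      ∑ k ∈ Finset.Ico 1 n, Real.cos ((k:ℝ)*(mm*π/n)) = (1 - Real.cos (mm*π))/2 - 1 := by
    intro mm h1 h2
    have := csum_half n mm (by omega) h1 h2
    rw [Finset.range_eq_Ico, ← Finset.sum_Ico_consecutive _
      (by omega : 0 ≤ 1) (by omega : 1 ≤ n)] at this
    have h0 : ∑ k ∈ Finset.Ico (0:ℕ) 1, Real.cos ((k:ℝ)*(mm*π/n)) = 1 := by simp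
    rw [h0] at this
    linarith
  rcases eq_or_ne m 0 with hm0 | hm0
  · rw [hm0]
    have hA : ∑ k ∈ Finset.Ico 1 n, Real.cos ((k:ℝ)*(((0:ℕ):ℝ)*π/n)) = (n:ℝ) - 1 := by
      have hone : ∀ k ∈ Finset.Ico 1 n, Real.cos ((k:ℝ)*(((0:ℕ):ℝ)*π/n)) = 1 := by
        intro k _; norm_num
      rw [Finset.sum_congr rfl hone, Finset.sum_const, Nat.card_Ico, nsmul_eq_mul]
      push_cast [Nat.cast_sub (by omega : 1 ≤ n)]
      ring
    have hB : ∑ k ∈ Finset.Ico 1 n, Real.cos ((k:ℝ)*((((0:ℕ):ℝ)+1)*π/n)) = 0 := by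
      have h := hIS 1 (le_refl 1) (by omega)
      have hcg : ∀ k ∈ Finset.Ico 1 n, Real.cos ((k:ℝ)*((((0:ℕ):ℝ)+1)*π/n))
          = Real.cos ((k:ℝ)*(((1:ℕ):ℝ)*π/n)) := by
        intro k _; norm_num
      rw [Finset.sum_congr rfl hcg, h]
      norm_num
    rw [hA, hB, if_pos rfl]
    field_simp
    ring
  · rw [if_neg hm0]
    have hA := hIS m (by omega) (by omega)
    have hB := hIS (m+1) (by omega) (by omega)
    push_cast at hA hB ⊢
    rw [hA, hB]
    have hc : Real.cos (((m:ℝ)+1)*π) = -Real.cos ((m:ℝ)*π) := by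
      have : ((m:ℝ)+1)*π = (m:ℝ)*π + π := by ring
      rw [this, Real.cos_add, Real.cos_pi, Real.sin_pi]
      ring
    rw [hc]
    field_simp
    ring

/-- Spectral formula for powers of `P`. -/
lemma pow_formula (n : ℕ) (hn : 2 ≤ n) (P : Matrix (Fin n) (Fin n) ℝ)
    (hP : ∀ i j : Fin n, P i j =
      if ((i : ℕ) = 0 ∧ (j : ℕ) = 0) ∨ ((i : ℕ) = n - 1 ∧ (j : ℕ) = n - 1) then (2/3 : ℝ)
      else if (i : ℕ) ≤ (j : ℕ) + 1 ∧ (j : ℕ) ≤ (i : ℕ) + 1 then (1/3 : ℝ) else 0)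
    (i0 : Fin n) (hi0 : (i0 : ℕ) = 0) (s : ℕ) (i : Fin n) :
    (P ^ s) i i0 = ∑ k ∈ Finset.range n,
      ((if k = 0 then (1:ℝ) else 2)/n * Real.cos ((k:ℝ)*(π/(2*n))))
        * (1/3 + 2/3 * Real.cos (2*((k:ℝ)*(π/(2*n)))))^s
        * Real.cos ((2*(i:ℕ)+1)*((k:ℝ)*(π/(2*n)))) := by
  induction s generalizing i with
  | zero =>
    simp only [pow_zero, Matrix.one_apply, mul_one]
    have hiff : (i = i0) ↔ ((i:ℕ) = 0) := by
      rw [Fin.ext_iff, hi0]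
    rw [if_congr hiff rfl rfl]
    exact (base_case n hn i).symm
  | succ s ih =>
    rw [pow_succ', Matrix.mul_apply]
    have step1 : ∀ j : Fin n, P i j * (P ^ s) j i0
        = ∑ k ∈ Finset.range n,
          ((if k = 0 then (1:ℝ) else 2)/n * Real.cos ((k:ℝ)*(π/(2*n))))
            * (1/3 + 2/3 * Real.cos (2*((k:ℝ)*(π/(2*n)))))^s
            * (P i j * Real.cos ((2*(j:ℕ)+1)*((k:ℝ)*(π/(2*n))))) := by
      intro j
      rw [ih j, Finset.mul_sum]
      exact Finset.sum_congr rfl fun k _ => by ring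
    rw [Finset.sum_congr rfl (fun j _ => step1 j), Finset.sum_comm]
    refine Finset.sum_congr rfl fun k _ => ?_
    rw [← Finset.mul_sum, eigen n hn P hP k i]
    ring

/-- telescoping tail bound for inverse squares -/
lemma invsq_tail (M : ℕ) (hM : 1 ≤ M) (N : ℕ) :
    ∑ k ∈ Finset.Ico (M+1) N, (1:ℝ)/(k:ℝ)^2 ≤ 1/M := by
  have hM' : (1:ℝ) ≤ (M:ℝ) := by exact_mod_cast hM
  have key : ∀ L : ℕ, ∑ k ∈ Finset.Ico (M+1) (M+1+L), (1:ℝ)/(k:ℝ)^2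
      ≤ 1/M - 1/((M:ℝ)+L) := by
    intro L
    induction L with
    | zero => simp
    | succ L ih =>
      have hst : M + 1 ≤ M + 1 + L := by omega
      have harr : M + 1 + (L+1) = (M + 1 + L) + 1 := by omega
      rw [harr, Finset.sum_Ico_succ_top hst]
      have hML : (1:ℝ) ≤ (M:ℝ) + L := by
        have : (0:ℝ) ≤ (L:ℝ) := Nat.cast_nonneg L
        linarith
      have hcast : ((M + 1 + L : ℕ) : ℝ) = (M:ℝ) + L + 1 := by push_cast; ring
      have hstep : (1:ℝ)/((M:ℝ)+L+1)^2 ≤ 1/((M:ℝ)+L) - 1/((M:ℝ)+L+1) := by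
        rw [div_sub_div _ _ (by linarith) (by linarith)]
        rw [div_le_div_iff₀ (by positivity) (by positivity)]
        nlinarith
      have hc2 : ((M:ℝ) + ((L:ℕ)+1:ℕ)) = (M:ℝ) + L + 1 := by push_cast; ring
      rw [hcast, hc2]
      linarith
  rcases le_or_gt N (M+1) with h | h
  · rw [Finset.Ico_eq_empty (by omega), Finset.sum_empty]
    positivity
  · have hNL : N = M + 1 + (N - M - 1) := by omega
    rw [hNL]
    refine (key (N - M - 1)).trans ?_
    have h1 : (0:ℝ) < (M:ℝ) + ((N - M - 1 : ℕ):ℝ) := by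
      have : (0:ℝ) ≤ ((N - M - 1 : ℕ):ℝ) := Nat.cast_nonneg _
      linarith
    have h2 : (0:ℝ) ≤ 1/((M:ℝ) + ((N - M - 1 : ℕ):ℝ)) := by positivity
    linarith


end Stmt9Aux

set_option maxHeartbeats 1000000 in
open Stmt9Aux Real in
/-- `P` is the transition matrix of the lazy reflecting random walk on the path
with `n ≥ 2` vertices (indexed by `Fin n`, so vertex `1` of the paper is index
`0`).  The `(1,1)` entry of `I + P + ⋯ + P^t`, which is the expected number of
returns `h_{1,1}(t)`, is at most `c√t` for all `1 ≤ t ≤ n²`, where `c > 0` is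
an absolute constant independent of `n`. -/
theorem stmt_9 : ∃ c : ℝ, 0 < c ∧
    ∀ (n : ℕ) (hn : 2 ≤ n) (P : Matrix (Fin n) (Fin n) ℝ),
    (∀ i j : Fin n, P i j =
      if ((i : ℕ) = 0 ∧ (j : ℕ) = 0) ∨ ((i : ℕ) = n - 1 ∧ (j : ℕ) = n - 1) then (2/3 : ℝ)
      else if (i : ℕ) ≤ (j : ℕ) + 1 ∧ (j : ℕ) ≤ (i : ℕ) + 1 then (1/3 : ℝ) else 0) →
    ∀ t : ℕ, 1 ≤ t → t ≤ n ^ 2 →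
      (∑ s ∈ Finset.range (t + 1), P ^ s) ⟨0, by omega⟩ ⟨0, by omega⟩ ≤ c * Real.sqrt t := by
  refine ⟨100, by norm_num, ?_⟩
  intro n hn P hP t ht htn
  set i0 : Fin n := ⟨0, by omega⟩ with hi0def
  have hnr : (0:ℝ) < (n:ℝ) := by positivity
  set θ : ℕ → ℝ := fun k => (k:ℝ)*(π/(2*n)) with hθ
  set lam : ℕ → ℝ := fun k => 1/3 + 2/3 * Real.cos (2*(θ k)) with hlam
  set d : ℕ → ℝ := fun k => (if k = 0 then (1:ℝ) else 2)/n * Real.cos (θ k) * Real.cos (θ k)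
    with hd
  -- the entry as a spectral sum
  have hentry : (∑ s ∈ Finset.range (t+1), P ^ s) i0 i0
      = ∑ k ∈ Finset.range n, d k * (∑ s ∈ Finset.range (t+1), (lam k)^s) := by
    rw [Matrix.sum_apply]
    rw [Finset.sum_congr rfl (fun s _ => pow_formula n hn P hP i0 rfl s i0)]
    rw [Finset.sum_comm]
    refine Finset.sum_congr rfl fun k _ => ?_
    have hc : Real.cos ((2*((i0:ℕ):ℝ)+1)*(θ k)) = Real.cos (θ k) := by
      have h0 : ((i0:ℕ):ℝ) = 0 := by norm_num [hi0def]
      rw [h0]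
      norm_num
    rw [Finset.mul_sum]
    refine Finset.sum_congr rfl fun s _ => ?_
    rw [hc]
    simp only [hd, hlam, hθ]
    ring
  rw [hentry]
  -- facts about sqrt t
  set u : ℝ := Real.sqrt t with hu
  have hu0 : 0 < u := Real.sqrt_pos.2 (by exact_mod_cast ht)
  have hu3 : u^2 = t := Real.sq_sqrt (by positivity)
  have hu1 : 1 ≤ u := by
    have h1 : (1:ℝ) ≤ (t:ℝ) := by exact_mod_cast ht
    nlinarith
  have hu2 : u ≤ n := by
    have h1 : (t:ℝ) ≤ ((n:ℝ))^2 := by exact_mod_cast htn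
    nlinarith
  -- the ceiling cut point
  set M : ℕ := ⌈(n:ℝ)/u⌉₊ with hM
  have hM1 : 1 ≤ M := Nat.one_le_ceil_iff.2 (by positivity)
  have hMpos : (0:ℝ) < (M:ℝ) := by exact_mod_cast hM1
  have hMle : (M:ℝ) ≤ (n:ℝ)/u + 1 := (Nat.ceil_lt_add_one (by positivity)).le
  have hMge : (n:ℝ)/u ≤ (M:ℝ) := Nat.le_ceil _
  have hMinv : 1/(M:ℝ) ≤ u/(n:ℝ) := by
    rw [div_le_div_iff₀ hMpos hnr]
    have := (div_le_iff₀ hu0).1 hMge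
    nlinarith
  -- bounds on d
  have hd_nonneg : ∀ k, 0 ≤ d k := by
    intro k
    simp only [hd]
    rcases eq_or_ne k 0 with h | h
    · rw [if_pos h, mul_assoc]
      exact mul_nonneg (by positivity) (mul_self_nonneg _)
    · rw [if_neg h, mul_assoc]
      exact mul_nonneg (by positivity) (mul_self_nonneg _)
  have hd_le : ∀ k, d k ≤ 2/(n:ℝ) := by
    intro k
    simp only [hd]
    have hc1 : Real.cos (θ k) * Real.cos (θ k) ≤ 1 := by
      nlinarith [Real.neg_one_le_cos (θ k), Real.cos_le_one (θ k)]
    have hcc : 0 ≤ Real.cos (θ k) * Real.cos (θ k) := mul_self_nonneg _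
    have hinv : (0:ℝ) < 1/(n:ℝ) := by positivity
    rcases eq_or_ne k 0 with h | h
    · rw [if_pos h]; rw [div_mul_eq_mul_div, div_mul_eq_mul_div, div_le_div_iff₀ hnr hnr]
      nlinarith
    · rw [if_neg h]; rw [div_mul_eq_mul_div, div_mul_eq_mul_div, div_le_div_iff₀ hnr hnr]
      nlinarith
  -- the k = 0 term
  have hk0 : d 0 * (∑ s ∈ Finset.range (t+1), (lam 0)^s) = ((t:ℝ)+1)/n := by
    have h1 : lam 0 = 1 := by norm_num [hlam, hθ]
    have h2 : d 0 = 1/(n:ℝ) := by norm_num [hd, hθ]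
    rw [h1, h2]
    simp only [one_pow, Finset.sum_const, Finset.card_range, nsmul_eq_mul, mul_one]
    push_cast
    ring
  -- per-k bound for k ≥ 1
  have hbound : ∀ k ∈ Finset.Ico 1 n, d k * (∑ s ∈ Finset.range (t+1), (lam k)^s)
      ≤ (2/(n:ℝ)) * min ((t:ℝ)+1) ((3/2)*(n:ℝ)^2/(k:ℝ)^2) := by
    intro k hk
    have hk1 : 1 ≤ k := (Finset.mem_Ico.1 hk).1
    have hk2 : k < n := (Finset.mem_Ico.1 hk).2
    have hkr : (1:ℝ) ≤ (k:ℝ) := by exact_mod_cast hk1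
    have hkn : (k:ℝ) ≤ (n:ℝ) := by exact_mod_cast hk2.le
    set x : ℝ := (k:ℝ)*π/(n:ℝ) with hx
    have h2θ : 2*(θ k) = x := by
      simp only [hθ, hx]
      field_simp
    have hx0 : 0 ≤ x := by rw [hx]; positivity
    have hxπ : x ≤ π := by
      rw [hx]
      rw [div_le_iff₀ hnr]
      nlinarith [Real.pi_pos]
    have hcosub : Real.cos x ≤ 1 - 2/π^2*x^2 :=
      Real.cos_le_one_sub_mul_cos_sq (by rw [abs_of_nonneg hx0]; exact hxπ)
    have hxsq : 2/π^2*x^2 = 2*(k:ℝ)^2/(n:ℝ)^2 := by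
      rw [hx]
      field_simp
    have hgap : (4/3)*(k:ℝ)^2/(n:ℝ)^2 ≤ 1 - lam k := by
      simp only [hlam]
      rw [h2θ]
      rw [hxsq] at hcosub
      have : (4/3)*(k:ℝ)^2/(n:ℝ)^2 = (2/3)*(2*(k:ℝ)^2/(n:ℝ)^2) := by ring
      rw [this]
      linarith
    have hgappos : (0:ℝ) < 1 - lam k :=
      lt_of_lt_of_le (by positivity) hgap
    have hlam_le : lam k ≤ 1 := by linarith
    have hlam_ge : -1 ≤ lam k := by
      simp only [hlam]
      nlinarith [Real.neg_one_le_cos (2*(θ k))]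
    have habs1 : |lam k| ≤ 1 := abs_le.2 ⟨hlam_ge, hlam_le⟩
    have hG1 : (∑ s ∈ Finset.range (t+1), (lam k)^s) ≤ (t:ℝ)+1 := by
      calc (∑ s ∈ Finset.range (t+1), (lam k)^s)
          ≤ ∑ s ∈ Finset.range (t+1), (1:ℝ) := by
            refine Finset.sum_le_sum fun s _ => ?_
            calc (lam k)^s ≤ |(lam k)^s| := le_abs_self _
              _ = |lam k|^s := abs_pow _ _
              _ ≤ 1 := pow_le_one₀ (abs_nonneg _) habs1
        _ = (t:ℝ)+1 := by
            rw [Finset.sum_const, Finset.card_range, nsmul_eq_mul, mul_one]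
            push_cast; ring
    have hG2 : (∑ s ∈ Finset.range (t+1), (lam k)^s) ≤ 2/(1 - lam k) := by
      have hne : lam k ≠ 1 := by linarith
      rw [geom_sum_eq hne]
      have hflip : ((lam k)^(t+1) - 1)/(lam k - 1) = (1 - (lam k)^(t+1))/(1 - lam k) := by
        rw [← neg_div_neg_eq]
        ring_nf
      rw [hflip]
      have hnum : 1 - (lam k)^(t+1) ≤ 2 := by
        have habspow : |(lam k)^(t+1)| ≤ 1 := by
          rw [abs_pow]; exact pow_le_one₀ (abs_nonneg _) habs1
        have := (abs_le.1 habspow).1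
        linarith
      exact (div_le_div_iff_of_pos_right hgappos).2 hnum
    have h23 : 2/(1 - lam k) ≤ (3/2)*(n:ℝ)^2/(k:ℝ)^2 := by
      have heq : 2/((4/3)*(k:ℝ)^2/(n:ℝ)^2) = (3/2)*(n:ℝ)^2/(k:ℝ)^2 := by
        field_simp
        ring
      rw [← heq]
      exact div_le_div_of_nonneg_left (by norm_num) (by positivity) hgap
    have hGmin : (∑ s ∈ Finset.range (t+1), (lam k)^s)
        ≤ min ((t:ℝ)+1) ((3/2)*(n:ℝ)^2/(k:ℝ)^2) := le_min hG1 (hG2.trans h23)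
    have hmin0 : 0 ≤ min ((t:ℝ)+1) ((3/2)*(n:ℝ)^2/(k:ℝ)^2) :=
      le_min (by positivity) (div_nonneg (by positivity) (by positivity))
    calc d k * (∑ s ∈ Finset.range (t+1), (lam k)^s)
        ≤ d k * min ((t:ℝ)+1) ((3/2)*(n:ℝ)^2/(k:ℝ)^2) :=
          mul_le_mul_of_nonneg_left hGmin (hd_nonneg k)
      _ ≤ (2/(n:ℝ)) * min ((t:ℝ)+1) ((3/2)*(n:ℝ)^2/(k:ℝ)^2) :=
          mul_le_mul_of_nonneg_right (hd_le k) hmin0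
  -- split off the k = 0 term
  have hsplit : ∑ k ∈ Finset.range n, d k * (∑ s ∈ Finset.range (t+1), (lam k)^s)
      = d 0 * (∑ s ∈ Finset.range (t+1), (lam 0)^s)
        + ∑ k ∈ Finset.Ico 1 n, d k * (∑ s ∈ Finset.range (t+1), (lam k)^s) := by
    rw [Finset.range_eq_Ico,
      ← Finset.sum_Ico_consecutive _ (by omega : (0:ℕ) ≤ 1) (by omega : 1 ≤ n)]
    congr 1
    simp
  rw [hsplit, hk0]
  set B : ℕ → ℝ := fun k => min ((t:ℝ)+1) ((3/2)*(n:ℝ)^2/(k:ℝ)^2) with hBdef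
  have hB0 : ∀ k, 0 ≤ B k := fun k =>
    le_min (by positivity) (div_nonneg (by positivity) (by positivity))
  -- bound the sum of B over Ico 1 n
  have hpart1 : ∑ k ∈ (Finset.Ico 1 n).filter (fun k => k ≤ M), B k
      ≤ (M:ℝ)*((t:ℝ)+1) := by
    calc ∑ k ∈ (Finset.Ico 1 n).filter (fun k => k ≤ M), B k
        ≤ ∑ k ∈ (Finset.Ico 1 n).filter (fun k => k ≤ M), ((t:ℝ)+1) :=
          Finset.sum_le_sum fun k _ => min_le_left _ _
      _ = (((Finset.Ico 1 n).filter (fun k => k ≤ M)).card : ℝ) * ((t:ℝ)+1) := by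
          rw [Finset.sum_const, nsmul_eq_mul]
      _ ≤ (M:ℝ)*((t:ℝ)+1) := by
          have hsub : (Finset.Ico 1 n).filter (fun k => k ≤ M) ⊆ Finset.Ico 1 (M+1) := by
            intro k hk
            simp only [Finset.mem_filter, Finset.mem_Ico] at *
            omega
          have hcard : ((Finset.Ico 1 n).filter (fun k => k ≤ M)).card ≤ M := by
            have := Finset.card_le_card hsub
            rwa [Nat.card_Ico, Nat.add_sub_cancel] at this
          have hc : (((Finset.Ico 1 n).filter (fun k => k ≤ M)).card : ℝ) ≤ (M:ℝ) := by
            exact_mod_cast hcard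
          exact mul_le_mul_of_nonneg_right hc (by positivity)
  have hpart2 : ∑ k ∈ (Finset.Ico 1 n).filter (fun k => ¬ k ≤ M), B k
      ≤ (3/2)*(n:ℝ)^2*(1/(M:ℝ)) := by
    calc ∑ k ∈ (Finset.Ico 1 n).filter (fun k => ¬ k ≤ M), B k
        ≤ ∑ k ∈ (Finset.Ico 1 n).filter (fun k => ¬ k ≤ M), (3/2)*(n:ℝ)^2/(k:ℝ)^2 :=
          Finset.sum_le_sum fun k _ => min_le_right _ _
      _ ≤ ∑ k ∈ Finset.Ico (M+1) n, (3/2)*(n:ℝ)^2/(k:ℝ)^2 := by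
          refine Finset.sum_le_sum_of_subset_of_nonneg ?_
            (fun k _ _ => div_nonneg (by positivity) (by positivity))
          intro k hk
          simp only [Finset.mem_filter, Finset.mem_Ico] at *
          omega
      _ = (3/2)*(n:ℝ)^2 * ∑ k ∈ Finset.Ico (M+1) n, (1:ℝ)/(k:ℝ)^2 := by
          rw [Finset.mul_sum]
          exact Finset.sum_congr rfl fun k _ => by rw [mul_one_div]
      _ ≤ (3/2)*(n:ℝ)^2*(1/(M:ℝ)) :=
          mul_le_mul_of_nonneg_left (invsq_tail M hM1 n) (by positivity)
  have hsumB : ∑ k ∈ Finset.Ico 1 n, B k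
      ≤ (M:ℝ)*((t:ℝ)+1) + (3/2)*(n:ℝ)^2*(1/(M:ℝ)) := by
    rw [← Finset.sum_filter_add_sum_filter_not (Finset.Ico 1 n) (fun k => k ≤ M)]
    exact add_le_add hpart1 hpart2
  -- numeric endgame
  have hA : ((t:ℝ)+1)/(n:ℝ) ≤ 2*u := by
    rw [div_le_iff₀ hnr]
    nlinarith
  have hBnum : (2/(n:ℝ))*((M:ℝ)*((t:ℝ)+1)) ≤ 8*u := by
    have h1 : (M:ℝ) ≤ 2*((n:ℝ)/u) := by
      have : 1 ≤ (n:ℝ)/u := (one_le_div hu0).2 (by linarith)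
      linarith
    have h2 : (t:ℝ)+1 ≤ 2*u^2 := by nlinarith
    have h3 : (M:ℝ)*((t:ℝ)+1) ≤ 4*(n:ℝ)*u := by
      have h4 := mul_le_mul h1 h2 (by positivity) (by positivity)
      have h5 : (2*((n:ℝ)/u))*(2*u^2) = 4*(n:ℝ)*u := by
        field_simp
        ring
      linarith [h4, h5.le, h5.ge]
    calc (2/(n:ℝ))*((M:ℝ)*((t:ℝ)+1)) ≤ (2/(n:ℝ))*(4*(n:ℝ)*u) :=
          mul_le_mul_of_nonneg_left h3 (by positivity)
      _ = 8*u := by field_simp; ring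
  have hCnum : (2/(n:ℝ))*((3/2)*(n:ℝ)^2*(1/(M:ℝ))) ≤ 3*u := by
    have heq : (2/(n:ℝ))*((3/2)*(n:ℝ)^2*(1/(M:ℝ))) = 3*(n:ℝ)*(1/(M:ℝ)) := by
      field_simp
    rw [heq]
    calc 3*(n:ℝ)*(1/(M:ℝ)) ≤ 3*(n:ℝ)*(u/(n:ℝ)) :=
          mul_le_mul_of_nonneg_left hMinv (by positivity)
      _ = 3*u := by field_simp
  calc ((t:ℝ)+1)/(n:ℝ) + ∑ k ∈ Finset.Ico 1 n, d k * (∑ s ∈ Finset.range (t+1), (lam k)^s)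
      ≤ ((t:ℝ)+1)/(n:ℝ) + ∑ k ∈ Finset.Ico 1 n, (2/(n:ℝ)) * B k :=
        add_le_add (le_refl _) (Finset.sum_le_sum hbound)
    _ = ((t:ℝ)+1)/(n:ℝ) + (2/(n:ℝ)) * ∑ k ∈ Finset.Ico 1 n, B k := by
        rw [Finset.mul_sum]
    _ ≤ ((t:ℝ)+1)/(n:ℝ) + (2/(n:ℝ)) * ((M:ℝ)*((t:ℝ)+1) + (3/2)*(n:ℝ)^2*(1/(M:ℝ))) := by
        have := mul_le_mul_of_nonneg_left hsumB (by positivity : (0:ℝ) ≤ 2/(n:ℝ))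
        linarith
    _ = ((t:ℝ)+1)/(n:ℝ) + (2/(n:ℝ))*((M:ℝ)*((t:ℝ)+1)) + (2/(n:ℝ))*((3/2)*(n:ℝ)^2*(1/(M:ℝ))) := by
        ring
    _ ≤ 2*u + 8*u + 3*u := by linarith [hA, hBnum, hCnum]
    _ ≤ 100 * u := by linarith [hu0.le]
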